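/- Let ∘ and ∗ be two group operations on a finite set G. If #{(x,y) ∈ G × G : x∘y = x∗y} > (7/9)·|G|², then the groups (G,∘) and (G,∗) are isomorphic. -/

import Mathlib

open Finset

private theorem sum_sq_le_sq_sum' {α : Type*} (s : Finset α) (f : α → ℕ) :
    ∑ a ∈ s, (f a) ^ 2 ≤ (∑ a ∈ s, f a) ^ 2 := by
  calc ∑ a ∈ s, (f a) ^ 2 = ∑ a ∈ s, f a * f a := by simp [pow_two]
    _ ≤ ∑ a ∈ s, f a * (∑ b ∈ s, f b) := by
        refine Finset.sum_le_sum fun a ha => ?_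
        exact Nat.mul_le_mul_left _ (Finset.single_le_sum (fun b _ => Nat.zero_le _) ha)
    _ = (∑ a ∈ s, f a) ^ 2 := by rw [← Finset.sum_mul, pow_two]

set_option maxHeartbeats 2000000 in
private theorem aux_iso {A B : Type*} [Finite A] (gA : Group A) (gB : Group B) (f : A ≃ B)
    (hK : 9 * Nat.card {p : A × A // f (gA.mul p.1 p.2) = gB.mul (f p.1) (f p.2)}
      > 7 * (Nat.card A) ^ 2) :
    ∃ e : A ≃ B, ∀ x y : A, e (gA.mul x y) = gB.mul (e x) (e y) := by
  classical
  letI := gA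
  letI := gB
  cases nonempty_fintype A
  haveI : Nonempty A := ⟨(1 : A)⟩
  letI : Fintype B := Fintype.ofEquiv A f
  set n := Fintype.card A with hn
  have hn0 : 0 < n := Fintype.card_pos
  set pass : A × A → Prop := fun p => f (p.1 * p.2) = f p.1 * f p.2 with hpass
  set K : ℕ := (univ.filter fun p : A × A => pass p).card with hKdef
  have hKn : K + (univ.filter fun p : A × A => ¬ pass p).card = n * n := by
    rw [hKdef, Finset.card_filter_add_card_filter_not]
    simp [Finset.card_univ, hn]
  have hK' : 7 * n ^ 2 < 9 * K := by
    have h1 : Nat.card {p : A × A // pass p} = K := by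
      rw [Nat.card_eq_fintype_card, Fintype.card_subtype]
    have h2 : (Nat.card A) = n := Nat.card_eq_fintype_card
    have hK2 : 9 * Nat.card {p : A × A // pass p} > 7 * (Nat.card A) ^ 2 := hK
    rw [h1, h2] at hK2
    exact hK2
  set g : A → A → B := fun x y => f (x * y) * (f y)⁻¹ with hg
  set N : A → B → ℕ := fun x c => (univ.filter fun y => g x y = c).card with hN
  have hNsum : ∀ x, ∑ c, N x c = n := by
    intro x
    have := Finset.card_eq_sum_card_fiberwise
      (s := (univ : Finset A)) (t := (univ : Finset B)) (f := g x) (fun a _ => mem_univ _)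
    simpa [hN, hn] using this.symm
  -- collision bound
  have hcol : ∀ x : A, 2 * K ≤ (∑ c, (N x c) ^ 2) + n ^ 2 := by
    intro x
    have hsplit : (univ.filter fun p : A × A => g x p.1 = g x p.2).card
        + (univ.filter fun p : A × A => ¬ (g x p.1 = g x p.2)).card = n * n := by
      rw [Finset.card_filter_add_card_filter_not]
      simp [Finset.card_univ, hn]
    have hEqcard : (univ.filter fun p : A × A => g x p.1 = g x p.2).card
        = ∑ c, (N x c) ^ 2 := by
      rw [Finset.card_eq_sum_card_fiberwise
        (f := fun p : A × A => g x p.1) (t := (univ : Finset B)) (fun p _ => mem_univ _)]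
      refine Finset.sum_congr rfl fun c _ => ?_
      have hset : ((univ.filter fun p : A × A => g x p.1 = g x p.2).filter
            fun p : A × A => g x p.1 = c)
          = (univ.filter fun y => g x y = c) ×ˢ (univ.filter fun y => g x y = c) := by
        ext ⟨a, b⟩
        simp only [Finset.mem_filter, Finset.mem_product, Finset.mem_univ, true_and]
        constructor
        · rintro ⟨h1, h2⟩; exact ⟨h2, h1.symm.trans h2⟩
        · rintro ⟨h1, h2⟩; exact ⟨h1.trans h2.symm, h1⟩
      rw [hset, Finset.card_product, pow_two]
    -- bound the disagreement set
    have hsub : (univ.filter fun p : A × A => ¬ (g x p.1 = g x p.2))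
        ⊆ (univ.filter fun p : A × A => ¬ pass (x * p.2, p.2⁻¹ * p.1))
          ∪ (univ.filter fun p : A × A => ¬ pass (p.2, p.2⁻¹ * p.1)) := by
      intro p hp
      simp only [Finset.mem_filter, Finset.mem_univ, true_and] at hp
      by_contra hcon
      simp only [Finset.mem_union, Finset.mem_filter, Finset.mem_univ, true_and, not_or,
        not_not] at hcon
      obtain ⟨h1, h2⟩ := hcon
      apply hp
      simp only [hpass] at h1 h2
      have e1 : f (x * p.1) = f (x * p.2) * f (p.2⁻¹ * p.1) := by
        have h1' := h1
        rw [show (x * p.2) * (p.2⁻¹ * p.1) = x * p.1 by group] at h1'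
        exact h1'
      have e2 : f p.1 = f p.2 * f (p.2⁻¹ * p.1) := by
        have h2' := h2
        rw [show (p.2) * (p.2⁻¹ * p.1) = p.1 by group] at h2'
        exact h2'
      show g x p.1 = g x p.2
      simp only [hg]
      rw [e1, e2]
      group
    have hT1 : (univ.filter fun p : A × A => ¬ pass (x * p.2, p.2⁻¹ * p.1)).card
        = (univ.filter fun p : A × A => ¬ pass p).card := by
      refine Finset.card_bij' (fun p _ => (x * p.2, p.2⁻¹ * p.1))
        (fun q _ => (x⁻¹ * q.1 * q.2, x⁻¹ * q.1)) ?_ ?_ ?_ ?_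
      · intro p hp
        simp only [Finset.mem_filter, Finset.mem_univ, true_and] at hp ⊢
        exact hp
      · intro q hq
        simp only [Finset.mem_filter, Finset.mem_univ, true_and] at hq ⊢
        have : (x * (x⁻¹ * q.1), (x⁻¹ * q.1)⁻¹ * (x⁻¹ * q.1 * q.2)) = q := by
          ext <;> simp <;> group
        rw [this]
        exact hq
      · intro p _
        ext <;> simp <;> group
      · intro q _
        ext <;> simp <;> group
    have hT2 : (univ.filter fun p : A × A => ¬ pass (p.2, p.2⁻¹ * p.1)).card
        = (univ.filter fun p : A × A => ¬ pass p).card := by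
      refine Finset.card_bij' (fun p _ => (p.2, p.2⁻¹ * p.1))
        (fun q _ => (q.1 * q.2, q.1)) ?_ ?_ ?_ ?_
      · intro p hp
        simp only [Finset.mem_filter, Finset.mem_univ, true_and] at hp ⊢
        exact hp
      · intro q hq
        simp only [Finset.mem_filter, Finset.mem_univ, true_and] at hq ⊢
        have heq : ((q.1 : A), (q.1)⁻¹ * (q.1 * q.2)) = q := by
          ext <;> simp <;> group
        rw [heq]
        exact hq
      · intro p _
        ext <;> simp <;> group
      · intro q _
        ext <;> simp <;> group
    have hNeq : (univ.filter fun p : A × A => ¬ (g x p.1 = g x p.2)).card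
        ≤ 2 * (univ.filter fun p : A × A => ¬ pass p).card := by
      calc (univ.filter fun p : A × A => ¬ (g x p.1 = g x p.2)).card
          ≤ ((univ.filter fun p : A × A => ¬ pass (x * p.2, p.2⁻¹ * p.1))
            ∪ (univ.filter fun p : A × A => ¬ pass (p.2, p.2⁻¹ * p.1))).card :=
            Finset.card_le_card hsub
        _ ≤ _ := by
            refine (Finset.card_union_le _ _).trans ?_
            rw [hT1, hT2]; omega
    have hpow : n ^ 2 = n * n := by ring
    omega
  -- majority function
  have hmax : ∀ x : A, ∃ c : B, ∀ c', N x c' ≤ N x c := by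
    intro x
    obtain ⟨c, -, hc⟩ := Finset.exists_max_image (univ : Finset B) (N x) ⟨f 1, mem_univ _⟩
    exact ⟨c, fun c' => hc c' (mem_univ _)⟩
  choose h hh using hmax
  have hbig : ∀ x : A, 2 * n < 3 * N x (h x) := by
    intro x
    set m := N x (h x) with hm
    set r := ∑ c ∈ univ.erase (h x), N x c with hr
    have h1 : m + r = n := by
      rw [← hNsum x, hm, hr]
      exact Finset.add_sum_erase univ (N x) (mem_univ _)
    have h2 : ∑ c, (N x c) ^ 2 = m ^ 2 + ∑ c ∈ univ.erase (h x), (N x c) ^ 2 :=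
      (Finset.add_sum_erase univ (fun c => (N x c) ^ 2) (mem_univ _)).symm
    have h3 : ∑ c ∈ univ.erase (h x), (N x c) ^ 2 ≤ r ^ 2 := sum_sq_le_sq_sum' _ _
    have h4 : ∑ c, (N x c) ^ 2 ≤ m * n := by
      calc ∑ c, (N x c) ^ 2 ≤ ∑ c, m * N x c := by
            refine Finset.sum_le_sum fun c _ => ?_
            rw [pow_two]
            exact Nat.mul_le_mul_right _ (hh x c)
        _ = m * n := by rw [← Finset.mul_sum, hNsum]
    have h5 := hcol x
    have h6 : 5 * n ^ 2 < 9 * (m * n) := by nlinarith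
    have h7 : 5 * n < 9 * m := by
      have := Nat.lt_of_mul_lt_mul_right (a := n) (by nlinarith : 5 * n * n < 9 * m * n)
      omega
    by_contra hcon
    push_neg at hcon
    have h8 : 9 * (∑ c, (N x c) ^ 2) ≤ 9 * m ^ 2 + 9 * r ^ 2 := by omega
    have h9 : 5 * n ^ 2 < 9 * m ^ 2 + 9 * r ^ 2 := by nlinarith
    zify at h1 h7 h9 hcon
    nlinarith [mul_nonneg (by linarith : (0:ℤ) ≤ 2 * (r:ℤ) - m) (by linarith : (0:ℤ) ≤ 2 * (m:ℤ) - r)]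
  -- h is a homomorphism
  have hcard1 : ∀ x y : A, (univ.filter fun z => g x (y * z) = h x).card = N x (h x) := by
    intro x y
    refine Finset.card_bij' (fun z _ => y * z) (fun w _ => y⁻¹ * w) ?_ ?_ ?_ ?_
    · intro z hz
      simp only [Finset.mem_filter, Finset.mem_univ, true_and] at hz ⊢
      exact hz
    · intro w hw
      simp only [Finset.mem_filter, Finset.mem_univ, true_and] at hw ⊢
      rw [show y * (y⁻¹ * w) = w by group]
      exact hw
    · intro z _; group
    · intro w _; group
  have hhom : ∀ x y : A, h (x * y) = h x * h y := by
    intro x y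
    set S1 := univ.filter fun z => g x (y * z) = h x with hS1
    set S2 := univ.filter fun z : A => g y z = h y with hS2
    set S3 := univ.filter fun z : A => g (x * y) z = h (x * y) with hS3
    have c1 : 2 * n < 3 * S1.card := by rw [hS1, hcard1]; exact hbig x
    have c2 : 2 * n < 3 * S2.card := hbig y
    have c3 : 2 * n < 3 * S3.card := hbig (x * y)
    have u1 : S1.card + S2.card ≤ n + (S1 ∩ S2).card := by
      have hcu := Finset.card_union_add_card_inter S1 S2
      have hu : (S1 ∪ S2).card ≤ n := by
        simpa [hn] using Finset.card_le_univ (S1 ∪ S2)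
      omega
    have u2 : (S1 ∩ S2).card + S3.card ≤ n + (S1 ∩ S2 ∩ S3).card := by
      have hcu := Finset.card_union_add_card_inter (S1 ∩ S2) S3
      have hu : ((S1 ∩ S2) ∪ S3).card ≤ n := by
        simpa [hn] using Finset.card_le_univ ((S1 ∩ S2) ∪ S3)
      omega
    have hpos : 0 < (S1 ∩ S2 ∩ S3).card := by omega
    obtain ⟨z, hz⟩ := Finset.card_pos.mp hpos
    simp only [hS1, hS2, hS3, Finset.mem_inter, Finset.mem_filter, Finset.mem_univ,
      true_and] at hz
    obtain ⟨⟨e1, e2⟩, e3⟩ := hz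
    have key : g (x * y) z = g x (y * z) * g y z := by
      simp only [hg]
      rw [mul_assoc x y z]
      group
    rw [← e3, key, e1, e2]
  -- h is injective
  have hinj : Function.Injective h := by
    intro x₁ x₂ hx
    set S1 := univ.filter fun z : A => g x₁ z = h x₁ with hS1
    set S2 := univ.filter fun z : A => g x₂ z = h x₂ with hS2
    have c1 : 2 * n < 3 * S1.card := hbig x₁
    have c2 : 2 * n < 3 * S2.card := hbig x₂
    have u1 : S1.card + S2.card ≤ n + (S1 ∩ S2).card := by
      have hcu := Finset.card_union_add_card_inter S1 S2
      have hu : (S1 ∪ S2).card ≤ n := by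
        simpa [hn] using Finset.card_le_univ (S1 ∪ S2)
      omega
    have hpos : 0 < (S1 ∩ S2).card := by omega
    obtain ⟨z, hz⟩ := Finset.card_pos.mp hpos
    simp only [hS1, hS2, Finset.mem_inter, Finset.mem_filter, Finset.mem_univ, true_and] at hz
    obtain ⟨e1, e2⟩ := hz
    have : g x₁ z = g x₂ z := by rw [e1, e2, hx]
    simp only [hg] at this
    have h1 : f (x₁ * z) = f (x₂ * z) := by
      have := mul_right_cancel this
      exact this
    have h2 : x₁ * z = x₂ * z := f.injective h1
    exact mul_right_cancel h2
  have hb : Function.Bijective h := by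
    rw [Nat.bijective_iff_injective_and_card]
    exact ⟨hinj, Nat.card_congr f⟩
  exact ⟨Equiv.ofBijective h hb, fun x y => hhom x y⟩

theorem stmt_14 {G : Type*} [Finite G] (g₁ g₂ : Group G)
    (hclose : 9 * Nat.card {p : G × G // g₁.mul p.1 p.2 = g₂.mul p.1 p.2}
      > 7 * (Nat.card G) ^ 2) :
    ∃ e : G ≃ G, ∀ x y : G, e (g₁.mul x y) = g₂.mul (e x) (e y) := by
  exact aux_iso g₁ g₂ (Equiv.refl G) hclose
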